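/- For real numbers $a > |b| > 0$, we have $\int_0^1 \log(a + b\cos(\pi x))\, dx = \log\left(\frac{a + \sqrt{a^2 - b^2}}{2}\right)$. In particular, $\int_0^1 \log(5 - 4\cos(\pi x))\, dx = 2\log 2$. -/

import Mathlib

open Real

open MeasureTheory in
lemma aux_hasSum (r : ℝ) (hr : |r| < 1) (x : ℝ) :
    HasSum (fun n : ℕ => 2 * ((-1)^(n+1) * r^n / n) * Real.cos (n*x))
      (Real.log (1 + 2*r*Real.cos x + r^2)) := by
  set z : ℂ := (r : ℂ) * Complex.exp (x * Complex.I) with hzdef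
  have hz : ‖z‖ < 1 := by
    simp [hzdef, Complex.norm_exp_ofReal_mul_I, Complex.norm_real, Real.norm_eq_abs, hr]
  have h2 := ((Complex.hasSum_taylorSeries_log hz).mapL Complex.reCLM).mul_left 2
  have hterm : ∀ n : ℕ, 2 * Complex.reCLM ((-1)^(n+1) * z^n / n)
      = 2 * ((-1)^(n+1) * r^n / n) * Real.cos (n*x) := by
    intro n
    have h : (-1:ℂ)^(n+1) * z^n / n
        = (((-1:ℝ)^(n+1) * r^n / n : ℝ) : ℂ) * Complex.exp ((n*x : ℝ) * Complex.I) := by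
      rw [hzdef, mul_pow, ← Complex.exp_nat_mul]
      push_cast
      ring
    rw [h]
    simp only [Complex.reCLM_apply, Complex.re_ofReal_mul, Complex.exp_ofReal_mul_I_re]
    ring
  have hval : 2 * Complex.reCLM (Complex.log (1 + z))
      = Real.log (1 + 2*r*Real.cos x + r^2) := by
    have hre : (1 + z).re = 1 + r * Real.cos x := by
      simp [hzdef, Complex.exp_ofReal_mul_I_re]
    have him : (1 + z).im = r * Real.sin x := by
      simp [hzdef, Complex.exp_ofReal_mul_I_im]
    have hnsq : Complex.normSq (1 + z) = 1 + 2*r*Real.cos x + r^2 := by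
      rw [Complex.normSq_apply, hre, him]
      nlinarith [Real.sin_sq_add_cos_sq x]
    simp only [Complex.reCLM_apply, Complex.log_re, Complex.norm_def, hnsq]
    rw [Real.log_sqrt (by nlinarith [Complex.normSq_nonneg (1+z), hnsq])]
    ring
  rw [← hval]
  exact h2.congr_fun fun n => (hterm n).symm

open MeasureTheory in
lemma aux_int_zero (r : ℝ) (hr : |r| < 1) :
    ∫ x in (0:ℝ)..Real.pi, Real.log (1 + 2*r*Real.cos x + r^2) = 0 := by
  set F : ℕ → ℝ → ℝ := fun n x => 2 * ((-1)^(n+1) * r^n / n) * Real.cos (n*x) with hF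
  set μ := volume.restrict (Set.Ioc (0:ℝ) Real.pi) with hμ
  have hcont : ∀ n, Continuous (F n) := by intro n; fun_prop
  have hF_int : ∀ n, Integrable (F n) μ := fun n => (hcont n).integrableOn_Ioc
  -- pointwise bound on coefficients
  have hcoef : ∀ n : ℕ, |(-1:ℝ)^(n+1) * r^n / n| ≤ |r|^n := by
    intro n
    rcases Nat.eq_zero_or_pos n with rfl | hn
    · simp
    · rw [abs_div, abs_mul, abs_pow, abs_pow, abs_neg, abs_one, one_pow, one_mul,
        Nat.abs_cast]
      rw [div_le_iff₀ (by positivity)]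
      nlinarith [pow_nonneg (abs_nonneg r) n, (Nat.one_le_cast (α := ℝ)).mpr hn]
  have hbound : ∀ n x, ‖F n x‖ ≤ 2 * |r|^n := by
    intro n x
    rw [hF]
    simp only [Real.norm_eq_abs, abs_mul, abs_two]
    calc 2 * |(-1:ℝ)^(n+1) * r^n / n| * |Real.cos (n*x)|
        ≤ 2 * |r|^n * 1 := by
          apply mul_le_mul (mul_le_mul_of_nonneg_left (hcoef n) (by norm_num))
            (Real.abs_cos_le_one _) (abs_nonneg _) (by positivity)
      _ = 2 * |r|^n := by ring
  have hμfin : (μ Set.univ).toReal = Real.pi := by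
    rw [hμ, Measure.restrict_apply_univ, Real.volume_Ioc, sub_zero, ENNReal.toReal_ofReal Real.pi_pos.le]
  have hF_sum : Summable fun n => ∫ x, ‖F n x‖ ∂μ := by
    apply Summable.of_nonneg_of_le (fun n => integral_nonneg fun x => norm_nonneg _)
      (fun n => ?_) ((summable_geometric_of_lt_one (abs_nonneg r) hr).mul_left (Real.pi * 2))
    calc ∫ x, ‖F n x‖ ∂μ ≤ ∫ _x, 2 * |r|^n ∂μ :=
          integral_mono (hF_int n).norm (integrable_const _) (fun x => hbound n x)
      _ = Real.pi * (2 * |r|^n) := by rw [integral_const, measureReal_def, hμfin, smul_eq_mul]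
      _ = Real.pi * 2 * |r|^n := by ring
  have key := integral_tsum_of_summable_integral_norm hF_int hF_sum
  have h0 : ∀ n : ℕ, ∫ x, F n x ∂μ = 0 := by
    intro n
    have : ∫ x, F n x ∂μ = ∫ x in (0:ℝ)..Real.pi, F n x := by
      rw [intervalIntegral.integral_of_le Real.pi_pos.le, hμ]
    rw [this, hF]
    rcases Nat.eq_zero_or_pos n with rfl | hn
    · simp
    · simp only [intervalIntegral.integral_const_mul]
      have hn' : (n:ℝ) ≠ 0 := Nat.cast_ne_zero.mpr hn.ne'
      rw [intervalIntegral.integral_comp_mul_left (fun x => Real.cos x) hn']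
      simp [Real.sin_nat_mul_pi]
  rw [intervalIntegral.integral_of_le Real.pi_pos.le, ← hμ]
  have hptc : ∀ x, Real.log (1 + 2*r*Real.cos x + r^2) = ∑' n, F n x := fun x =>
    (aux_hasSum r hr x).tsum_eq.symm
  calc ∫ x, Real.log (1 + 2*r*Real.cos x + r^2) ∂μ = ∫ x, (∑' n, F n x) ∂μ := by
        simp_rw [hptc]
    _ = ∑' n, ∫ x, F n x ∂μ := key.symm
    _ = 0 := by simp [h0]

lemma aux_main (a b : ℝ) (hb : 0 < |b|) (hab : |b| < a) :
    ∫ x in (0 : ℝ)..1, Real.log (a + b * Real.cos (Real.pi * x)) =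
      Real.log ((a + Real.sqrt (a ^ 2 - b ^ 2)) / 2) := by
  have ha : 0 < a := lt_trans hb hab
  set s := Real.sqrt (a^2 - b^2) with hs
  have hs0 : 0 ≤ s := Real.sqrt_nonneg _
  have hb2 : b^2 < a^2 := by nlinarith [abs_nonneg b, sq_abs b]
  have hs2 : s^2 = a^2 - b^2 := Real.sq_sqrt (by linarith)
  set c := (a + s)/2 with hc
  have hcpos : 0 < c := by positivity
  have has : 0 < a + s := by linarith
  set r := b / (a + s) with hr
  have habs : |r| < 1 := by
    rw [hr, abs_div, abs_of_pos has, div_lt_one has]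
    calc |b| < a := hab
      _ ≤ a + s := by linarith
  have hcr : c * r = b / 2 := by rw [hc, hr]; field_simp
  have hcr2 : c * (1 + r^2) = a := by
    rw [hc, hr]
    field_simp
    ring_nf
    linear_combination hs2
  have hid : ∀ θ : ℝ, a + b * Real.cos θ = c * (1 + 2*r*Real.cos θ + r^2) := by
    intro θ
    have h : c * (1 + 2*r*Real.cos θ + r^2) = c * (1 + r^2) + 2*(c*r)*Real.cos θ := by ring
    rw [h, hcr2, hcr]
    ring
  have hqpos : ∀ θ : ℝ, 0 < 1 + 2*r*Real.cos θ + r^2 := by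
    intro θ
    nlinarith [Real.neg_one_le_cos θ, Real.cos_le_one θ, abs_nonneg r, sq_abs r,
      neg_abs_le r, le_abs_self r, sq_nonneg (1 - |r|), mul_le_mul_of_nonneg_left
        (Real.neg_one_le_cos θ) (abs_nonneg r)]
  have hlog : ∀ θ : ℝ, Real.log (a + b * Real.cos θ)
      = Real.log c + Real.log (1 + 2*r*Real.cos θ + r^2) := by
    intro θ
    rw [hid θ, Real.log_mul hcpos.ne' (hqpos θ).ne']
  -- substitution
  have hsub : ∫ x in (0:ℝ)..1, Real.log (a + b * Real.cos (Real.pi * x))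
      = Real.pi⁻¹ • ∫ x in (0:ℝ)..Real.pi, Real.log (a + b * Real.cos x) := by
    rw [intervalIntegral.integral_comp_mul_left
      (fun x => Real.log (a + b * Real.cos x)) Real.pi_ne_zero]
    norm_num
  rw [hsub]
  have hint2 : IntervalIntegrable (fun x => Real.log (1 + 2*r*Real.cos x + r^2))
      MeasureTheory.volume 0 Real.pi := by
    apply Continuous.intervalIntegrable
    exact (by fun_prop : Continuous fun x : ℝ => 1 + 2*r*Real.cos x + r^2).log
      fun x => (hqpos x).ne'
  have : ∫ x in (0:ℝ)..Real.pi, Real.log (a + b * Real.cos x)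
      = ∫ x in (0:ℝ)..Real.pi, (Real.log c + Real.log (1 + 2*r*Real.cos x + r^2)) := by
    apply intervalIntegral.integral_congr
    intro x _
    exact hlog x
  rw [this, intervalIntegral.integral_add (intervalIntegrable_const) hint2,
    aux_int_zero r habs, intervalIntegral.integral_const]
  simp [Real.pi_ne_zero, hc]

/-- For `a > |b| > 0`, `∫₀¹ log(a + b cos(πx)) dx = log((a + √(a² - b²))/2)`.
In particular, `∫₀¹ log(5 - 4cos(πx)) dx = 2 log 2`. -/
theorem log_cos_integral (a b : ℝ) (hb : 0 < |b|) (hab : |b| < a) :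
    (∫ x in (0 : ℝ)..1, Real.log (a + b * Real.cos (Real.pi * x)) =
      Real.log ((a + Real.sqrt (a ^ 2 - b ^ 2)) / 2)) ∧
    (∫ x in (0 : ℝ)..1, Real.log (5 - 4 * Real.cos (Real.pi * x)) = 2 * Real.log 2) := by
  refine ⟨aux_main a b hb hab, ?_⟩
  have h := aux_main 5 (-4) (by norm_num) (by norm_num)
  have hsq : Real.sqrt ((5:ℝ)^2 - (-4:ℝ)^2) = 3 := by
    rw [show ((5:ℝ)^2 - (-4:ℝ)^2) = 3^2 by norm_num, Real.sqrt_sq (by norm_num)]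
  rw [hsq] at h
  have heq : (∫ x in (0:ℝ)..1, Real.log (5 - 4 * Real.cos (Real.pi * x)))
      = ∫ x in (0:ℝ)..1, Real.log (5 + (-4) * Real.cos (Real.pi * x)) := by
    apply intervalIntegral.integral_congr
    intro x _
    ring_nf
  rw [heq, h, show ((5:ℝ)+3)/2 = 2^2 by norm_num, Real.log_pow]
  norm_num
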